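/- Let W(p,x) := lim_{k→∞} (B^k ψ)(p,x) be the pointwise limit of the Bellman iterates of ψ. Then for each x ∈ S: (i) the map p ↦ W(p,x) is concave on [0,1]; (ii) W(1,x) = 0; and (iii) the continuation value A(p,x) := Σ_{x'∈S} P(x'|p,x)·W(Φ(x',x,p), x') satisfies 0 ≤ A(p,x) ≤ λ(1−ρ)(1−p) for all p ∈ [0,1]. -/

import Mathlib

open Finset Filter Topology

noncomputable section

/-- `p̄ = p + ρ(1-p)`, the predicted change probability. -/
def pbar (ρ p : ℝ) : ℝ := p + ρ * (1 - p)

/-- Likelihood ratio `L(x',x) = Q₂(x'|x) / Q₁(x'|x)`. -/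
def likeRatio {S : Type*} (Q1 Q2 : S → S → ℝ) (x' x : S) : ℝ := Q2 x x' / Q1 x x'

/-- Bayesian posterior update `Φ(x',x,p)`. -/
def post {S : Type*} (Q1 Q2 : S → S → ℝ) (ρ : ℝ) (x' x : S) (p : ℝ) : ℝ :=
  pbar ρ p * likeRatio Q1 Q2 x' x / (pbar ρ p * likeRatio Q1 Q2 x' x + (1 - pbar ρ p))

/-- Predictive probability `P(x'|p,x)`. -/
def pred {S : Type*} (Q1 Q2 : S → S → ℝ) (ρ : ℝ) (x' : S) (p : ℝ) (x : S) : ℝ :=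
  (1 - pbar ρ p) * Q1 x x' + pbar ρ p * Q2 x x'

/-- The Bellman operator `B`. -/
def bell {S : Type*} [Fintype S] (Q1 Q2 : S → S → ℝ) (ρ lam : ℝ)
    (V : ℝ → S → ℝ) : ℝ → S → ℝ :=
  fun p x => min (lam * (1 - p))
    (p + ∑ x' : S, pred Q1 Q2 ρ x' p x * V (post Q1 Q2 ρ x' x p) x')

/-- The stopping cost `ψ(p,x) = λ(1-p)`. -/
def psi (S : Type*) (lam : ℝ) : ℝ → S → ℝ := fun p _ => lam * (1 - p)

/-! ### Auxiliary lemmas -/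

section Aux

variable {S : Type*}

lemma pbar_pos {ρ p : ℝ} (hρ : 0 < ρ) (hρ1 : ρ < 1) (hp : 0 ≤ p) (hp1 : p ≤ 1) :
    0 < pbar ρ p := by unfold pbar; nlinarith

lemma pbar_le_one {ρ p : ℝ} (hρ1 : ρ < 1) (hp1 : p ≤ 1) : pbar ρ p ≤ 1 := by
  unfold pbar; nlinarith

lemma pbar_affine (ρ a b p q : ℝ) (hab : a + b = 1) :
    pbar ρ (a * p + b * q) = a * pbar ρ p + b * pbar ρ q := by
  unfold pbar; linear_combination -ρ * hab

lemma likeRatio_pos {Q1 Q2 : S → S → ℝ} {x' x : S}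
    (h1 : 0 < Q1 x x') (h2 : 0 < Q2 x x') : 0 < likeRatio Q1 Q2 x' x :=
  div_pos h2 h1

lemma denom_pos {Q1 Q2 : S → S → ℝ} {x' x : S} {ρ p : ℝ}
    (h1 : 0 < Q1 x x') (h2 : 0 < Q2 x x')
    (hρ : 0 < ρ) (hρ1 : ρ < 1) (hp : 0 ≤ p) (hp1 : p ≤ 1) :
    0 < pbar ρ p * likeRatio Q1 Q2 x' x + (1 - pbar ρ p) := by
  have hL := likeRatio_pos h1 h2
  have h3 := pbar_pos hρ hρ1 hp hp1
  have h4 := pbar_le_one hρ1 hp1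
  nlinarith

lemma post_mem {Q1 Q2 : S → S → ℝ} {x' x : S} {ρ p : ℝ}
    (h1 : 0 < Q1 x x') (h2 : 0 < Q2 x x')
    (hρ : 0 < ρ) (hρ1 : ρ < 1) (hp : 0 ≤ p) (hp1 : p ≤ 1) :
    post Q1 Q2 ρ x' x p ∈ Set.Icc (0 : ℝ) 1 := by
  have hL := likeRatio_pos h1 h2
  have h3 := pbar_pos hρ hρ1 hp hp1
  have h4 := pbar_le_one hρ1 hp1
  have hD := denom_pos h1 h2 hρ hρ1 hp hp1
  constructor
  · exact div_nonneg (by nlinarith) hD.le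
  · rw [post, div_le_one hD]; linarith

lemma pred_eq {Q1 Q2 : S → S → ℝ} {x' x : S} (h1 : 0 < Q1 x x') (ρ p : ℝ) :
    pred Q1 Q2 ρ x' p x
      = Q1 x x' * (pbar ρ p * likeRatio Q1 Q2 x' x + (1 - pbar ρ p)) := by
  unfold pred likeRatio
  field_simp
  ring

lemma pred_nonneg {Q1 Q2 : S → S → ℝ} {x' x : S} {ρ p : ℝ}
    (h1 : 0 < Q1 x x') (h2 : 0 < Q2 x x')
    (hρ : 0 < ρ) (hρ1 : ρ < 1) (hp : 0 ≤ p) (hp1 : p ≤ 1) :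
    0 ≤ pred Q1 Q2 ρ x' p x := by
  rw [pred_eq h1]
  exact mul_nonneg h1.le (denom_pos h1 h2 hρ hρ1 hp hp1).le

lemma pred_mul_one_sub_post {Q1 Q2 : S → S → ℝ} {x' x : S} {ρ p : ℝ}
    (h1 : 0 < Q1 x x') (h2 : 0 < Q2 x x')
    (hρ : 0 < ρ) (hρ1 : ρ < 1) (hp : 0 ≤ p) (hp1 : p ≤ 1) :
    pred Q1 Q2 ρ x' p x * (1 - post Q1 Q2 ρ x' x p) = Q1 x x' * (1 - pbar ρ p) := by
  have hD := denom_pos h1 h2 hρ hρ1 hp hp1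
  rw [pred_eq h1, post]
  field_simp
  ring

/-- An affine function is concave. -/
lemma affine_concaveOn (s : Set ℝ) (hs : Convex ℝ s) (c d : ℝ) :
    ConcaveOn ℝ s (fun p => c + d * p) := by
  refine ⟨hs, fun p _ q _ a b ha hb hab => ?_⟩
  simp only [smul_eq_mul]
  exact le_of_eq (by linear_combination c * hab)

/-- Finite sums of concave functions are concave. -/
lemma concaveOn_finset_sum {ι : Type*} (s : Set ℝ) (hs : Convex ℝ s) (t : Finset ι)
    (f : ι → ℝ → ℝ) (h : ∀ i ∈ t, ConcaveOn ℝ s (f i)) :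
    ConcaveOn ℝ s (fun p => ∑ i ∈ t, f i p) := by
  classical
  induction t using Finset.induction with
  | empty => simpa using concaveOn_const 0 hs
  | @insert i t hi ih =>
    simp only [Finset.sum_insert hi]
    exact (h i (Finset.mem_insert_self i t)).add
      (ih fun j hj => h j (Finset.mem_insert_of_mem hj))

/-- Key concavity step: `p ↦ P(x'|p,x) · V(Φ(x',x,p))` is concave when `V` is. -/
lemma concave_term {Q1 Q2 : S → S → ℝ} {x' x : S}
    (h1 : 0 < Q1 x x') (h2 : 0 < Q2 x x')
    {ρ : ℝ} (hρ : 0 < ρ) (hρ1 : ρ < 1)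
    {V : ℝ → ℝ} (hV : ConcaveOn ℝ (Set.Icc 0 1) V) :
    ConcaveOn ℝ (Set.Icc (0 : ℝ) 1)
      (fun p => pred Q1 Q2 ρ x' p x * V (post Q1 Q2 ρ x' x p)) := by
  have hL : 0 < likeRatio Q1 Q2 x' x := likeRatio_pos h1 h2
  set L := likeRatio Q1 Q2 x' x with hLdef
  refine ⟨convex_Icc _ _, fun p hp q hq a b ha hb hab => ?_⟩
  have hr : a • p + b • q ∈ Set.Icc (0 : ℝ) 1 := (convex_Icc 0 1) hp hq ha hb hab
  simp only [smul_eq_mul] at hr ⊢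
  set r := a * p + b * q with hrdef
  set Dp := pbar ρ p * L + (1 - pbar ρ p) with hDp
  set Dq := pbar ρ q * L + (1 - pbar ρ q) with hDq
  set Dr := pbar ρ r * L + (1 - pbar ρ r) with hDr
  have hDp0 : 0 < Dp := denom_pos h1 h2 hρ hρ1 hp.1 hp.2
  have hDq0 : 0 < Dq := denom_pos h1 h2 hρ hρ1 hq.1 hq.2
  have hDr0 : 0 < Dr := denom_pos h1 h2 hρ hρ1 hr.1 hr.2
  have hpbar : pbar ρ r = a * pbar ρ p + b * pbar ρ q := pbar_affine ρ a b p q hab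
  have hDaff : Dr = a * Dp + b * Dq := by
    rw [hDr, hDp, hDq]; linear_combination (L - 1) * hpbar - hab
  have hpostp : post Q1 Q2 ρ x' x p = pbar ρ p * L / Dp := rfl
  have hpostq : post Q1 Q2 ρ x' x q = pbar ρ q * L / Dq := rfl
  have hpostr : post Q1 Q2 ρ x' x r = pbar ρ r * L / Dr := rfl
  have ha' : 0 ≤ a * Dp / Dr := by positivity
  have hb' : 0 ≤ b * Dq / Dr := by positivity
  have hab' : a * Dp / Dr + b * Dq / Dr = 1 := by
    rw [← add_div, ← hDaff, div_self hDr0.ne']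
  have hcomb : (a * Dp / Dr) • (pbar ρ p * L / Dp) + (b * Dq / Dr) • (pbar ρ q * L / Dq)
      = pbar ρ r * L / Dr := by
    simp only [smul_eq_mul]
    have e1 : a * Dp / Dr * (pbar ρ p * L / Dp) = a * (pbar ρ p * L) / Dr := by
      field_simp
    have e2 : b * Dq / Dr * (pbar ρ q * L / Dq) = b * (pbar ρ q * L) / Dr := by
      field_simp
    rw [e1, e2, ← add_div]
    congr 1
    linear_combination -L * hpbar
  have key := hV.2 (hpostp ▸ post_mem h1 h2 hρ hρ1 hp.1 hp.2)
    (hpostq ▸ post_mem h1 h2 hρ hρ1 hq.1 hq.2) ha' hb' hab'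
  rw [hcomb] at key
  simp only [smul_eq_mul] at key
  have hmul := mul_le_mul_of_nonneg_left key (mul_nonneg h1.le hDr0.le)
  calc a * (pred Q1 Q2 ρ x' p x * V (post Q1 Q2 ρ x' x p))
        + b * (pred Q1 Q2 ρ x' q x * V (post Q1 Q2 ρ x' x q))
      = Q1 x x' * Dr * (a * Dp / Dr * V (pbar ρ p * L / Dp)
          + b * Dq / Dr * V (pbar ρ q * L / Dq)) := by
        rw [pred_eq h1 ρ p, pred_eq h1 ρ q, hpostp, hpostq, ← hDp, ← hDq]
        field_simp
    _ ≤ Q1 x x' * Dr * V (pbar ρ r * L / Dr) := hmul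
    _ = pred Q1 Q2 ρ x' r x * V (post Q1 Q2 ρ x' x r) := by
        rw [pred_eq h1 ρ r, hpostr, ← hDr]

end Aux

section Main

variable {S : Type*} [Fintype S]

/-- All the needed properties of the Bellman iterates, by induction. -/
lemma iter_props
    (Q1 Q2 : S → S → ℝ)
    (hQ1pos : ∀ x x', 0 < Q1 x x') (hQ2pos : ∀ x x', 0 < Q2 x x')
    (ρ : ℝ) (hρ0 : 0 < ρ) (hρ1 : ρ < 1)
    (lam : ℝ) (hlam : 0 < lam) (k : ℕ) :
    (∀ x : S, ConcaveOn ℝ (Set.Icc (0 : ℝ) 1)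
        (fun p => ((bell Q1 Q2 ρ lam)^[k] (psi S lam)) p x)) ∧
    (∀ x : S, ∀ p ∈ Set.Icc (0 : ℝ) 1,
        0 ≤ ((bell Q1 Q2 ρ lam)^[k] (psi S lam)) p x ∧
        ((bell Q1 Q2 ρ lam)^[k] (psi S lam)) p x ≤ lam * (1 - p)) ∧
    (∀ x : S, ((bell Q1 Q2 ρ lam)^[k] (psi S lam)) 1 x = 0) := by
  induction k with
  | zero =>
    refine ⟨fun x => ?_, fun x p hp => ⟨?_, ?_⟩, fun x => ?_⟩
    · have he : (fun p => ((bell Q1 Q2 ρ lam)^[0] (psi S lam)) p x)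
          = fun p => lam + -lam * p := by
        funext p
        show lam * (1 - p) = lam + -lam * p
        ring
      rw [he]
      exact affine_concaveOn (Set.Icc (0 : ℝ) 1) (convex_Icc _ _) lam (-lam)
    · simp only [Function.iterate_zero_apply, psi]
      nlinarith [hp.1, hp.2]
    · simp [psi]
    · simp [psi]
  | succ k ih =>
    obtain ⟨ihc, ihb, ih1⟩ := ih
    set Vk := (bell Q1 Q2 ρ lam)^[k] (psi S lam) with hVk
    have hiter : ∀ p (x : S), ((bell Q1 Q2 ρ lam)^[k+1] (psi S lam)) p x
        = bell Q1 Q2 ρ lam Vk p x := by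
      intro p x; rw [Function.iterate_succ_apply']
    refine ⟨fun x => ?_, fun x p hp => ?_, fun x => ?_⟩
    · -- concavity
      have hconc : ConcaveOn ℝ (Set.Icc (0 : ℝ) 1)
          (fun p => bell Q1 Q2 ρ lam Vk p x) := by
        have hlin : ConcaveOn ℝ (Set.Icc (0 : ℝ) 1) (fun p => lam * (1 - p)) := by
          have he : (fun p : ℝ => lam * (1 - p)) = fun p => lam + -lam * p := by
            funext p; ring
          rw [he]
          exact affine_concaveOn (Set.Icc (0 : ℝ) 1) (convex_Icc _ _) lam (-lam)
        have hsum : ConcaveOn ℝ (Set.Icc (0 : ℝ) 1)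
            (fun p => ∑ x' : S, pred Q1 Q2 ρ x' p x * Vk (post Q1 Q2 ρ x' x p) x') :=
          concaveOn_finset_sum _ (convex_Icc _ _) Finset.univ _
            (fun x' _ => concave_term (hQ1pos x x') (hQ2pos x x') hρ0 hρ1 (ihc x'))
        have hid : ConcaveOn ℝ (Set.Icc (0 : ℝ) 1) (fun p : ℝ => p) := by
          simpa using affine_concaveOn (Set.Icc (0 : ℝ) 1) (convex_Icc _ _) 0 1
        have h2 : ConcaveOn ℝ (Set.Icc (0 : ℝ) 1)
            (fun p => p + ∑ x' : S, pred Q1 Q2 ρ x' p x * Vk (post Q1 Q2 ρ x' x p) x') :=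
          hid.add hsum
        exact hlin.inf h2
      have : (fun p => ((bell Q1 Q2 ρ lam)^[k+1] (psi S lam)) p x)
          = fun p => bell Q1 Q2 ρ lam Vk p x := by
        funext p; exact hiter p x
      rw [this]; exact hconc
    · rw [hiter p x]
      constructor
      · refine le_min (by nlinarith [hp.1, hp.2]) ?_
        refine add_nonneg hp.1 (Finset.sum_nonneg fun x' _ => ?_)
        have hm := post_mem (hQ1pos x x') (hQ2pos x x') hρ0 hρ1 hp.1 hp.2
        exact mul_nonneg (pred_nonneg (hQ1pos x x') (hQ2pos x x') hρ0 hρ1 hp.1 hp.2)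
          ((ihb x' _ hm).1)
      · exact min_le_left _ _
    · rw [hiter 1 x]
      have hpost1 : ∀ x' : S, post Q1 Q2 ρ x' x 1 = 1 := by
        intro x'
        have hL : likeRatio Q1 Q2 x' x ≠ 0 := (likeRatio_pos (hQ1pos x x') (hQ2pos x x')).ne'
        simp [post, pbar, hL]
      have : ∀ x' : S, pred Q1 Q2 ρ x' 1 x * Vk (post Q1 Q2 ρ x' x 1) x' = 0 := by
        intro x'; rw [hpost1 x', ih1 x', mul_zero]
      simp only [bell, this, Finset.sum_const_zero, add_zero, sub_self, mul_zero]
      exact min_eq_left zero_le_one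

end Main

theorem stmt_12 {S : Type*} [Fintype S] [Nonempty S]
    (Q1 Q2 : S → S → ℝ)
    (hQ1pos : ∀ x x', 0 < Q1 x x') (hQ2pos : ∀ x x', 0 < Q2 x x')
    (hQ1row : ∀ x, ∑ x', Q1 x x' = 1) (hQ2row : ∀ x, ∑ x', Q2 x x' = 1)
    (ρ : ℝ) (hρ : ρ ∈ Set.Ioo (0 : ℝ) 1)
    (lam : ℝ) (hlam : 0 < lam)
    (W : ℝ → S → ℝ)
    (hW : ∀ p ∈ Set.Icc (0 : ℝ) 1, ∀ x : S,
        Filter.Tendsto (fun k : ℕ => ((bell Q1 Q2 ρ lam)^[k] (psi S lam)) p x)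
          Filter.atTop (nhds (W p x))) :
    ∀ x : S,
      ConcaveOn ℝ (Set.Icc (0 : ℝ) 1) (fun p => W p x) ∧
      W 1 x = 0 ∧
      ∀ p ∈ Set.Icc (0 : ℝ) 1,
        0 ≤ (∑ x' : S, pred Q1 Q2 ρ x' p x * W (post Q1 Q2 ρ x' x p) x') ∧
        (∑ x' : S, pred Q1 Q2 ρ x' p x * W (post Q1 Q2 ρ x' x p) x')
          ≤ lam * (1 - ρ) * (1 - p) := by
  obtain ⟨hρ0, hρ1⟩ := hρ
  have hprops := iter_props Q1 Q2 hQ1pos hQ2pos ρ hρ0 hρ1 lam hlam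
  -- W is nonnegative and ≤ λ(1-p) on [0,1]
  have hWnn : ∀ x : S, ∀ p ∈ Set.Icc (0 : ℝ) 1, 0 ≤ W p x := by
    intro x p hp
    exact ge_of_tendsto (hW p hp x)
      (Filter.Eventually.of_forall fun k => ((hprops k).2.1 x p hp).1)
  have hWle : ∀ x : S, ∀ p ∈ Set.Icc (0 : ℝ) 1, W p x ≤ lam * (1 - p) := by
    intro x p hp
    exact le_of_tendsto (hW p hp x)
      (Filter.Eventually.of_forall fun k => ((hprops k).2.1 x p hp).2)
  intro x
  refine ⟨?_, ?_, ?_⟩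
  · -- concavity of W
    refine ⟨convex_Icc _ _, fun p hp q hq a b ha hb hab => ?_⟩
    have hr : a • p + b • q ∈ Set.Icc (0 : ℝ) 1 := (convex_Icc 0 1) hp hq ha hb hab
    have hlim : Filter.Tendsto
        (fun k => a • ((bell Q1 Q2 ρ lam)^[k] (psi S lam)) p x
          + b • ((bell Q1 Q2 ρ lam)^[k] (psi S lam)) q x)
        Filter.atTop (nhds (a • W p x + b • W q x)) := by
      simp only [smul_eq_mul]
      exact ((hW p hp x).const_mul a).add ((hW q hq x).const_mul b)
    refine le_of_tendsto_of_tendsto' hlim (hW _ hr x) fun k => ?_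
    exact ((hprops k).1 x).2 hp hq ha hb hab
  · -- W 1 x = 0
    have h1 : Filter.Tendsto (fun k : ℕ => ((bell Q1 Q2 ρ lam)^[k] (psi S lam)) 1 x)
        Filter.atTop (nhds 0) := by
      have : (fun k : ℕ => ((bell Q1 Q2 ρ lam)^[k] (psi S lam)) 1 x) = fun _ => (0 : ℝ) := by
        funext k; exact (hprops k).2.2 x
      rw [this]; exact tendsto_const_nhds
    exact tendsto_nhds_unique (hW 1 ⟨zero_le_one, le_refl 1⟩ x) h1
  · intro p hp
    have hpostm : ∀ x' : S, post Q1 Q2 ρ x' x p ∈ Set.Icc (0 : ℝ) 1 :=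
      fun x' => post_mem (hQ1pos x x') (hQ2pos x x') hρ0 hρ1 hp.1 hp.2
    have hpn : ∀ x' : S, 0 ≤ pred Q1 Q2 ρ x' p x :=
      fun x' => pred_nonneg (hQ1pos x x') (hQ2pos x x') hρ0 hρ1 hp.1 hp.2
    constructor
    · exact Finset.sum_nonneg fun x' _ =>
        mul_nonneg (hpn x') (hWnn x' _ (hpostm x'))
    · have hstep : ∀ x' : S, pred Q1 Q2 ρ x' p x * W (post Q1 Q2 ρ x' x p) x'
          ≤ lam * Q1 x x' * (1 - pbar ρ p) := by
        intro x'
        have h1 : pred Q1 Q2 ρ x' p x * W (post Q1 Q2 ρ x' x p) x'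
            ≤ pred Q1 Q2 ρ x' p x * (lam * (1 - post Q1 Q2 ρ x' x p)) :=
          mul_le_mul_of_nonneg_left (hWle x' _ (hpostm x')) (hpn x')
        have h2 : pred Q1 Q2 ρ x' p x * (lam * (1 - post Q1 Q2 ρ x' x p))
            = lam * Q1 x x' * (1 - pbar ρ p) := by
          rw [show pred Q1 Q2 ρ x' p x * (lam * (1 - post Q1 Q2 ρ x' x p))
              = lam * (pred Q1 Q2 ρ x' p x * (1 - post Q1 Q2 ρ x' x p)) by ring,
            pred_mul_one_sub_post (hQ1pos x x') (hQ2pos x x') hρ0 hρ1 hp.1 hp.2]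
          ring
        exact h2 ▸ h1
      calc (∑ x' : S, pred Q1 Q2 ρ x' p x * W (post Q1 Q2 ρ x' x p) x')
          ≤ ∑ x' : S, lam * Q1 x x' * (1 - pbar ρ p) :=
            Finset.sum_le_sum fun x' _ => hstep x'
        _ = lam * (1 - pbar ρ p) * ∑ x' : S, Q1 x x' := by
            rw [Finset.mul_sum]; exact Finset.sum_congr rfl fun x' _ => by ring
        _ = lam * (1 - pbar ρ p) := by rw [hQ1row x, mul_one]
        _ = lam * (1 - ρ) * (1 - p) := by unfold pbar; ring
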